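/- Fix reals α > 0 and σ > 0. Let π : ℝ → [0,∞) be differentiable with ∫ π(x_0) dx_0 = 1, ∫ |x_0| · π(x_0) dx_0 < ∞, π′ Lebesgue-integrable, and π(x_0) → 0 as x_0 → ±∞. Define p(x) := ∫ π(x_0) · N(x; α·x_0, σ²) dx_0. Then p is differentiable on ℝ and satisfies the target score identity p′(x) = (1/α) · ∫ π′(x_0) · N(x; α·x_0, σ²) dx_0; equivalently, wherever quantities are defined, the score ∇ log p(x) equals (1/α) times the posterior expectation of ∇ log π(x_0) under the denoising posterior p(x_0 | x) ∝ π(x_0)·N(x; α·x_0, σ²). -/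

import Mathlib

open Real MeasureTheory Filter

/-- The one-dimensional Gaussian density with mean `m` and variance `v`:
`N(x; m, v) = (2 π v)^(-1/2) · exp(-(x - m)² / (2 v))`. -/
noncomputable def gaussDensity1 (v m x : ℝ) : ℝ :=
  (2 * Real.pi * v) ^ (-(1 : ℝ) / 2) * Real.exp (-(x - m) ^ 2 / (2 * v))

lemma gauss_hasDerivAt_x (v m x : ℝ) (hv : v ≠ 0) :
    HasDerivAt (fun x => gaussDensity1 v m x) (-((x - m)/v) * gaussDensity1 v m x) x := by
  have h1 : HasDerivAt (fun x : ℝ => -(x - m) ^ 2 / (2 * v)) (-((x - m)/v)) x := by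
    have := (((hasDerivAt_id x).sub_const m).pow 2).neg.div_const (2 * v)
    refine this.congr_deriv ?_
    simp only [id]
    field_simp
    ring
  have := (h1.exp).const_mul ((2 * Real.pi * v) ^ (-(1 : ℝ) / 2))
  refine this.congr_deriv ?_
  unfold gaussDensity1
  ring

lemma gauss_hasDerivAt_m (v m x : ℝ) (hv : v ≠ 0) :
    HasDerivAt (fun m => gaussDensity1 v m x) (((x - m)/v) * gaussDensity1 v m x) m := by
  have h1 : HasDerivAt (fun m : ℝ => -(x - m) ^ 2 / (2 * v)) ((x - m)/v) m := by
    have := (((hasDerivAt_id m).const_sub x).pow 2).neg.div_const (2 * v)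
    refine this.congr_deriv ?_
    simp only [id]
    field_simp
    ring
  have := (h1.exp).const_mul ((2 * Real.pi * v) ^ (-(1 : ℝ) / 2))
  refine this.congr_deriv ?_
  unfold gaussDensity1
  ring

lemma gauss_pos (v m x : ℝ) (hv : 0 < v) : 0 < gaussDensity1 v m x := by
  unfold gaussDensity1
  positivity

lemma gauss_le (v m x : ℝ) (hv : 0 < v) :
    gaussDensity1 v m x ≤ (2 * Real.pi * v) ^ (-(1 : ℝ) / 2) := by
  unfold gaussDensity1
  have h1 : Real.exp (-(x - m) ^ 2 / (2 * v)) ≤ 1 := by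
    apply Real.exp_le_one_iff.2
    apply div_nonpos_of_nonpos_of_nonneg
    · nlinarith [sq_nonneg (x - m)]
    · positivity
  have hc : (0:ℝ) ≤ (2 * Real.pi * v) ^ (-(1 : ℝ) / 2) := by positivity
  calc (2 * Real.pi * v) ^ (-(1 : ℝ) / 2) * Real.exp (-(x - m) ^ 2 / (2 * v))
      ≤ (2 * Real.pi * v) ^ (-(1 : ℝ) / 2) * 1 := by gcongr
    _ = (2 * Real.pi * v) ^ (-(1 : ℝ) / 2) := mul_one _

lemma gauss_cont (v x : ℝ) : Continuous (fun m => gaussDensity1 v m x) := by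
  unfold gaussDensity1
  fun_prop

/-- **Target score identity (one-dimensional).**
If `π` is a differentiable probability density on `ℝ` with finite first moment, integrable
derivative, and `π(x_0) → 0` as `x_0 → ±∞`, then `p(x) = ∫ π(x_0)·N(x; α·x_0, σ²) dx_0` is
differentiable with `p′(x) = (1/α)·∫ π′(x_0)·N(x; α·x_0, σ²) dx_0`. -/
theorem target_score_identity (α σ : ℝ) (hα : 0 < α) (hσ : 0 < σ)
    (pdens : ℝ → ℝ) (hπ_nonneg : ∀ x, 0 ≤ pdens x) (hπ_diff : Differentiable ℝ pdens)
    (hπ_norm : ∫ x₀, pdens x₀ = 1)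
    (hπ_mom : Integrable (fun x₀ => |x₀| * pdens x₀))
    (hπ'_int : Integrable (deriv pdens))
    (hπ_top : Tendsto pdens atTop (nhds 0))
    (hπ_bot : Tendsto pdens atBot (nhds 0)) :
    Differentiable ℝ (fun x => ∫ x₀, pdens x₀ * gaussDensity1 (σ ^ 2) (α * x₀) x) ∧
    ∀ x, deriv (fun x => ∫ x₀, pdens x₀ * gaussDensity1 (σ ^ 2) (α * x₀) x) x =
      (1 / α) * ∫ x₀, deriv pdens x₀ * gaussDensity1 (σ ^ 2) (α * x₀) x := by
  set v : ℝ := σ ^ 2 with hv_def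
  have hv : (0:ℝ) < v := by positivity
  have hvne : v ≠ 0 := ne_of_gt hv
  set c : ℝ := (2 * Real.pi * v) ^ (-(1 : ℝ) / 2) with hc_def
  have hc_pos : (0:ℝ) < c := by rw [hc_def]; positivity
  have hπ_int : Integrable pdens := by
    by_contra h
    rw [integral_undef h] at hπ_norm; norm_num at hπ_norm
  have hcontπ : Continuous pdens := hπ_diff.continuous
  set G : ℝ → ℝ → ℝ := fun x a => gaussDensity1 v (α * a) x with hG_def
  have hG_pos : ∀ x a, 0 < G x a := fun x a => gauss_pos v (α * a) x hv
  have hG_le : ∀ x a, G x a ≤ c := fun x a => gauss_le v (α * a) x hv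
  have hGcont : ∀ x, Continuous (fun a => G x a) := fun x =>
    (gauss_cont v x).comp (continuous_const.mul continuous_id)
  set F' : ℝ → ℝ → ℝ := fun x a => pdens a * (-((x - α * a)/v) * G x a) with hF'_def
  have hFcont : ∀ x : ℝ, Continuous (fun a => pdens a * G x a) := fun x =>
    hcontπ.mul (hGcont x)
  have hF'cont : ∀ x : ℝ, Continuous (F' x) := fun x =>
    hcontπ.mul ((((continuous_const.sub (continuous_const.mul continuous_id)).div_const
      v).neg).mul (hGcont x))
  have hF_int : ∀ x : ℝ, Integrable (fun a => pdens a * G x a) := by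
    intro x
    refine Integrable.mono' (hπ_int.const_mul c) (hFcont x).aestronglyMeasurable
      (ae_of_all _ fun a => ?_)
    rw [Real.norm_eq_abs, abs_mul, abs_of_nonneg (hπ_nonneg a),
      abs_of_nonneg (hG_pos x a).le]
    calc pdens a * G x a ≤ pdens a * c := by
          have := hG_le x a
          nlinarith [hπ_nonneg a]
      _ = c * pdens a := by ring
  have habs_sub : ∀ x a : ℝ, |x - α * a| ≤ |x| + α * |a| := by
    intro x a
    calc |x - α * a| ≤ |x| + |α * a| := abs_sub _ _
      _ = |x| + α * |a| := by rw [abs_mul, abs_of_pos hα]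
  -- the key differentiation under the integral sign
  have key : ∀ x : ℝ, HasDerivAt (fun x => ∫ a, pdens a * G x a) (∫ a, F' x a) x := by
    intro x₀
    have hbound_int : Integrable (fun a =>
        (c * (|x₀| + 1) / v) * pdens a + (c * α / v) * (|a| * pdens a)) :=
      (hπ_int.const_mul _).add (hπ_mom.const_mul _)
    have h := hasDerivAt_integral_of_dominated_loc_of_deriv_le
      (F := fun x a => pdens a * G x a) (F' := F')
      (bound := fun a => (c * (|x₀| + 1) / v) * pdens a + (c * α / v) * (|a| * pdens a))
      (Metric.ball_mem_nhds x₀ one_pos)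
      (Eventually.of_forall fun x => (hFcont x).aestronglyMeasurable)
      (hF_int x₀)
      ((hF'cont x₀).aestronglyMeasurable)
      (ae_of_all _ ?_)
      hbound_int
      (ae_of_all _ ?_)
    · exact h.2
    · intro a x hx
      have hxn : |x| ≤ |x₀| + 1 := by
        have h1 : |x - x₀| < 1 := by
          have := Metric.mem_ball.mp hx
          rwa [Real.dist_eq] at this
        have := abs_sub_abs_le_abs_sub x x₀
        linarith
      have h2 : |x - α * a| ≤ (|x₀| + 1) + α * |a| := by
        have := habs_sub x a
        linarith
      have h3 : 0 < G x a := hG_pos x a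
      have h4 : G x a ≤ c := hG_le x a
      rw [Real.norm_eq_abs, hF'_def]
      simp only
      rw [abs_mul, abs_mul, abs_of_nonneg (hπ_nonneg a), abs_of_nonneg h3.le, abs_neg,
        abs_div, abs_of_pos hv]
      have h5 : pdens a * (|x - α * a| / v * G x a)
          ≤ pdens a * (((|x₀| + 1) + α * |a|) / v * c) := by
        apply mul_le_mul_of_nonneg_left _ (hπ_nonneg a)
        apply mul_le_mul (by apply (div_le_div_iff_of_pos_right hv).mpr h2;) h4 h3.le
        · positivity
      calc pdens a * (|x - α * a| / v * G x a)
          ≤ pdens a * (((|x₀| + 1) + α * |a|) / v * c) := h5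
        _ = (c * (|x₀| + 1) / v) * pdens a + (c * α / v) * (|a| * pdens a) := by ring
    · intro a x _
      exact (gauss_hasDerivAt_x v (α * a) x hvne).const_mul (pdens a)
  constructor
  · exact fun x => (key x).differentiableAt
  · intro x
    rw [(key x).deriv]
    -- integration by parts in a
    set I1 : ℝ → ℝ := fun a => deriv pdens a * G x a with hI1_def
    set I2 : ℝ → ℝ := fun a => pdens a * (((x - α * a)/v * G x a) * α) with hI2_def
    have hI1_int : Integrable I1 := by
      refine Integrable.mono' (hπ'_int.abs.const_mul c)
        (hπ'_int.aestronglyMeasurable.mul (hGcont x).aestronglyMeasurable)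
        (ae_of_all _ fun a => ?_)
      rw [Real.norm_eq_abs, hI1_def]
      simp only
      rw [abs_mul, abs_of_nonneg (hG_pos x a).le]
      calc |deriv pdens a| * G x a ≤ |deriv pdens a| * c := by
            have := hG_le x a
            nlinarith [abs_nonneg (deriv pdens a)]
        _ = c * |deriv pdens a| := by ring
    have hI2_int : Integrable I2 := by
      refine Integrable.mono'
        (g := fun a => (α * c / v * |x|) * pdens a + (α * c * α / v) * (|a| * pdens a))
        ((hπ_int.const_mul _).add (hπ_mom.const_mul _))
        (hcontπ.mul ((((continuous_const.sub (continuous_const.mul continuous_id)).div_const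
          v).mul (hGcont x)).mul continuous_const)).aestronglyMeasurable
        (ae_of_all _ fun a => ?_)
      rw [Real.norm_eq_abs, hI2_def]
      simp only
      rw [abs_mul, abs_of_nonneg (hπ_nonneg a), abs_mul, abs_mul,
        abs_of_nonneg (hG_pos x a).le, abs_of_pos hα, abs_div, abs_of_pos hv]
      have h2 : |x - α * a| ≤ |x| + α * |a| := habs_sub x a
      have h5 : pdens a * (|x - α * a| / v * G x a * α)
          ≤ pdens a * ((|x| + α * |a|) / v * c * α) := by
        apply mul_le_mul_of_nonneg_left _ (hπ_nonneg a)
        apply mul_le_mul_of_nonneg_right _ hα.le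
        apply mul_le_mul ((div_le_div_iff_of_pos_right hv).mpr h2) (hG_le x a)
          (hG_pos x a).le
        positivity
      calc pdens a * (|x - α * a| / v * G x a * α)
          ≤ pdens a * ((|x| + α * |a|) / v * c * α) := h5
        _ = (α * c / v * |x|) * pdens a + (α * c * α / v) * (|a| * pdens a) := by ring
    have hderiv : ∀ a : ℝ, HasDerivAt (fun a => pdens a * G x a) (I1 a + I2 a) a := by
      intro a
      have hg : HasDerivAt (fun a => G x a) (((x - α * a)/v * G x a) * α) a := by
        have h1 := gauss_hasDerivAt_m v (α * a) x hvne
        have h2 : HasDerivAt (fun a : ℝ => α * a) α a := by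
          simpa using (hasDerivAt_id a).const_mul α
        exact h1.comp a h2
      exact (hπ_diff a).hasDerivAt.mul hg
    have hDint : Integrable (fun a => I1 a + I2 a) := hI1_int.add hI2_int
    have htop : Tendsto (fun a => pdens a * G x a) atTop (nhds 0) := by
      apply squeeze_zero (fun a => mul_nonneg (hπ_nonneg a) (hG_pos x a).le)
        (fun a => ?_) (by simpa using hπ_top.const_mul c)
      calc pdens a * G x a ≤ pdens a * c := by
            have := hG_le x a; nlinarith [hπ_nonneg a]
        _ = c * pdens a := by ring
    have hbot : Tendsto (fun a => pdens a * G x a) atBot (nhds 0) := by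
      apply squeeze_zero (fun a => mul_nonneg (hπ_nonneg a) (hG_pos x a).le)
        (fun a => ?_) (by simpa using hπ_bot.const_mul c)
      calc pdens a * G x a ≤ pdens a * c := by
            have := hG_le x a; nlinarith [hπ_nonneg a]
        _ = c * pdens a := by ring
    have hIBP : (∫ a, (I1 a + I2 a)) = 0 := by
      rw [integral_of_hasDerivAt_of_tendsto hderiv hDint hbot htop]
      simp
    rw [integral_add hI1_int hI2_int] at hIBP
    have hF'eq : ∀ a, F' x a = (-(1/α)) * I2 a := by
      intro a
      rw [hF'_def, hI2_def]
      simp only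
      field_simp
    calc (∫ a, F' x a) = ∫ a, (-(1/α)) * I2 a := by
          congr 1; funext a; exact hF'eq a
      _ = (-(1/α)) * ∫ a, I2 a := integral_const_mul _ _
      _ = (1/α) * ∫ a, I1 a := by
          have : (∫ a, I2 a) = -∫ a, I1 a := by linarith
          rw [this]; ring
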